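/- Coherent lower bound on the conditional relative entropy: Let σ > 0, ξ ∈ ℂ \ {0}, let H ~ 𝒩_ℂ(0,1) and W ~ 𝒩_ℂ(0,σ²) be independent, and let T : ℂ → (0,∞) be measurable. Put p₁(h) = P(|hξ + W| ≥ T(h)) (the 𝒩_ℂ(hξ, σ²)-measure of {y : |y| ≥ T(h)}) and p₀(h) = exp(−T(h)²/σ²). Then E_H[ d(p₁(H) ‖ p₀(H)) ] ≥ E_H[ p₁(H) · T(H)²/σ² ] − log 2. -/

import Mathlib

open MeasureTheory ProbabilityTheory Complex
open scoped ENNReal NNReal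

/-- Circularly symmetric complex Gaussian measure `𝒩_ℂ(m, v)` on `ℂ ≅ ℝ²`:
the product of two real Gaussians with means `Re m`, `Im m` and variance `v/2` each. -/
noncomputable def cgauss (m : ℂ) (v : ℝ) : Measure ℂ :=
  Measure.map Complex.measurableEquivRealProd.symm
    ((gaussianReal m.re (v / 2).toNNReal).prod (gaussianReal m.im (v / 2).toNNReal))

/-- Binary relative entropy `d(p‖q)`, i.e. the Kullback–Leibler divergence between
`Bernoulli(p)` and `Bernoulli(q)`, with the conventions `0·log 0 = 0` and
`d(p‖q) = +∞` if `q ∈ {0,1}` and `p ≠ q`. -/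
noncomputable def bre (p q : ℝ) : ℝ≥0∞ :=
  if (q = 0 ∨ q = 1) ∧ p ≠ q then ⊤
  else ENNReal.ofReal (p * Real.log (p / q) + (1 - p) * Real.log ((1 - p) / (1 - q)))

instance cgauss_prob (m : ℂ) (v : ℝ) : IsProbabilityMeasure (cgauss m v) := by
  unfold cgauss
  exact Measure.isProbabilityMeasure_map
    Complex.measurableEquivRealProd.symm.measurable.aemeasurable

lemma key_real (p q : ℝ) (hp0 : 0 ≤ p) (hp1 : p ≤ 1) (hq0 : 0 < q) (hq1 : q < 1) :
    p * (-Real.log q) - Real.log 2 ≤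
      p * Real.log (p / q) + (1 - p) * Real.log ((1 - p) / (1 - q)) := by
  have e1 : p * Real.log (p / q) = p * Real.log p - p * Real.log q := by
    rcases eq_or_lt_of_le hp0 with h | h
    · simp [← h]
    · rw [Real.log_div h.ne' hq0.ne']; ring
  have e2 : (1 - p) * Real.log ((1 - p) / (1 - q))
      = (1 - p) * Real.log (1 - p) - (1 - p) * Real.log (1 - q) := by
    rcases eq_or_lt_of_le (sub_nonneg.mpr hp1) with h | h
    · simp [← h]
    · rw [Real.log_div h.ne' (by linarith : (1:ℝ) - q ≠ 0)]; ring
  have hent : -Real.log 2 ≤ p * Real.log p + (1 - p) * Real.log (1 - p) := by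
    have h2 : Real.binEntropy p = -(p * Real.log p + (1 - p) * Real.log (1 - p)) := by
      rw [Real.binEntropy, Real.log_inv, Real.log_inv]; ring
    have := Real.binEntropy_le_log_two (p := p)
    linarith
  have hlogq : Real.log (1 - q) ≤ 0 :=
    Real.log_nonpos (by linarith) (by linarith)
  have : 0 ≤ -(1 - p) * Real.log (1 - q) := by nlinarith
  rw [e1, e2]
  nlinarith

lemma ofReal_max (x : ℝ) : ENNReal.ofReal (max x 0) = ENNReal.ofReal x := by
  rcases le_total x 0 with h | h
  · simp [max_eq_right h, ENNReal.ofReal_of_nonpos h]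
  · simp [max_eq_left h]

/-- Coherent lower bound on the conditional relative entropy: for a radial quantizer with
fading-dependent threshold `T(H) > 0`,
`E_H[d(p₁(H)‖p₀(H))] ≥ E_H[p₁(H)·T(H)²/σ²] − log 2`, where
`p₁(h) = 𝒩_ℂ(hξ,σ²){y : |y| ≥ T(h)}` and `p₀(h) = exp(−T(h)²/σ²)`. -/
theorem coherent_conditional_relEnt_lower_bound (σ : ℝ) (hσ : 0 < σ) (ξ : ℂ) (hξ : ξ ≠ 0)
    (T : ℂ → ℝ) (hTmeas : Measurable T) (hTpos : ∀ h, 0 < T h) :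
    ENNReal.ofReal
        ((∫ h, ((cgauss (h * ξ) (σ ^ 2)) {y : ℂ | T h ≤ ‖y‖}).toReal *
            (T h ^ 2 / σ ^ 2) ∂(cgauss 0 1)) - Real.log 2) ≤
      ∫⁻ h, bre ((cgauss (h * ξ) (σ ^ 2)) {y : ℂ | T h ≤ ‖y‖}).toReal
          (Real.exp (-(T h) ^ 2 / σ ^ 2)) ∂(cgauss 0 1) := by
  set μ := cgauss 0 1 with hμ
  set p : ℂ → ℝ := fun h =>
    ((cgauss (h * ξ) (σ ^ 2)) {y : ℂ | T h ≤ ‖y‖}).toReal with hp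
  set g : ℂ → ℝ := fun h => p h * (T h ^ 2 / σ ^ 2) with hg
  set f : ℂ → ℝ := fun h => g h - Real.log 2 with hf
  -- pointwise bound
  have hpt : ∀ h, ENNReal.ofReal (f h) ≤
      bre (p h) (Real.exp (-(T h) ^ 2 / σ ^ 2)) := by
    intro h
    set q := Real.exp (-(T h) ^ 2 / σ ^ 2) with hq
    have hq0 : 0 < q := Real.exp_pos _
    have hq1 : q < 1 := by
      rw [hq, Real.exp_lt_one_iff]
      exact div_neg_of_neg_of_pos (by nlinarith [hTpos h]) (by positivity)
    have hp0 : 0 ≤ p h := ENNReal.toReal_nonneg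
    have hp1 : p h ≤ 1 := by
      have h1 : (cgauss (h * ξ) (σ ^ 2)) {y : ℂ | T h ≤ ‖y‖} ≤ 1 :=
        prob_le_one
      calc p h ≤ (1 : ℝ≥0∞).toReal := ENNReal.toReal_mono (by simp) h1
        _ = 1 := by simp
    rw [bre, if_neg (by rintro ⟨(h1 | h1), -⟩ <;> [exact hq0.ne' h1; exact hq1.ne h1])]
    apply ENNReal.ofReal_le_ofReal
    have hlog : -Real.log q = T h ^ 2 / σ ^ 2 := by
      rw [hq, Real.log_exp]; ring
    have := key_real (p h) q hp0 hp1 hq0 hq1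
    rw [hlog] at this
    simpa [hf, hg] using this
  by_cases hint : Integrable g μ
  · have hfint : Integrable f μ := hint.sub (integrable_const _)
    have heq : (∫ h, g h ∂μ) - Real.log 2 = ∫ h, f h ∂μ := by
      rw [hf]
      rw [integral_sub hint (integrable_const _), integral_const, probReal_univ]
      simp
    rw [heq]
    calc ENNReal.ofReal (∫ h, f h ∂μ)
        ≤ ENNReal.ofReal (∫ h, max (f h) 0 ∂μ) := by
          apply ENNReal.ofReal_le_ofReal
          exact integral_mono hfint hfint.pos_part (fun h => le_max_left _ _)
      _ = ∫⁻ h, ENNReal.ofReal (max (f h) 0) ∂μ := by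
          exact ofReal_integral_eq_lintegral_ofReal hfint.pos_part
            (ae_of_all _ fun h => le_max_right _ _)
      _ = ∫⁻ h, ENNReal.ofReal (f h) ∂μ := by
          simp only [ofReal_max]
      _ ≤ _ := lintegral_mono hpt
  · rw [integral_undef hint]
    rw [ENNReal.ofReal_of_nonpos (by linarith [Real.log_nonneg (by norm_num : (1:ℝ) ≤ 2)])]
    exact zero_le
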